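/- The partial derivative of the call price C(t,s) = (s + (α/σ)e^{rt})Φ(d_{t,1}^α) - (Ke^{-r(T-t)} + (α/σ)e^{rt})Φ(d_{t,2}^α) with respect to the asset price s equals Φ(d_{t,1}^α) (the Delta of the call). -/

import Mathlib

open Real MeasureTheory

/-- Standard normal CDF. -/
noncomputable def Phi (d : ℝ) : ℝ :=
  ∫ u in Set.Iic d, Real.exp (-u ^ 2 / 2) / Real.sqrt (2 * Real.pi)

/-- d_{t,1}^α of the crisis model. -/
noncomputable def d1 (s K σ α r t T : ℝ) : ℝ :=
  (Real.log ((s + α / σ * Real.exp (r * t)) / (K + α / σ * Real.exp (r * T)))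
    + (r + σ ^ 2 / 2) * (T - t)) / (σ * Real.sqrt (T - t))

/-- d_{t,2}^α of the crisis model. -/
noncomputable def d2 (s K σ α r t T : ℝ) : ℝ :=
  d1 s K σ α r t T - σ * Real.sqrt (T - t)

/-- Crisis-model European call price. -/
noncomputable def C (s K σ α r t T : ℝ) : ℝ :=
  (s + α / σ * Real.exp (r * t)) * Phi (d1 s K σ α r t T)
    - (K * Real.exp (-r * (T - t)) + α / σ * Real.exp (r * t)) * Phi (d2 s K σ α r t T)

lemma gauss_integrable : Integrable (fun u : ℝ => Real.exp (-u ^ 2 / 2) / Real.sqrt (2 * Real.pi)) := by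
  have h : Integrable (fun x : ℝ => Real.exp (-(1/2 : ℝ) * x ^ 2)) :=
    integrable_exp_neg_mul_sq (by norm_num)
  have h2 := h.div_const (Real.sqrt (2 * Real.pi))
  convert h2 using 2 with x
  ring_nf

lemma gauss_continuous : Continuous (fun u : ℝ => Real.exp (-u ^ 2 / 2) / Real.sqrt (2 * Real.pi)) := by
  fun_prop

lemma hasDerivAt_Phi (d : ℝ) :
    HasDerivAt Phi (Real.exp (-d ^ 2 / 2) / Real.sqrt (2 * Real.pi)) d := by
  set f : ℝ → ℝ := fun u => Real.exp (-u ^ 2 / 2) / Real.sqrt (2 * Real.pi) with hf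
  have key : Phi = fun x => Phi 0 + ∫ u in (0:ℝ)..x, f u := by
    funext x
    have := intervalIntegral.integral_Iic_sub_Iic
      (gauss_integrable.integrableOn (s := Set.Iic 0))
      (gauss_integrable.integrableOn (s := Set.Iic x))
    simp only [Phi, hf]
    linarith [this]
  rw [key]
  have h : HasDerivAt (fun u => ∫ x in (0:ℝ)..u, f x) (f d) d :=
    intervalIntegral.integral_hasDerivAt_right
      (gauss_integrable.intervalIntegrable (a := 0) (b := d))
      (gauss_continuous.stronglyMeasurableAtFilter _ _)
      gauss_continuous.continuousAt
  exact ((hasDerivAt_const d (Phi 0)).add h).congr_deriv (by simp [hf])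

lemma delta_general (a b c m K' s : ℝ) (hsa : 0 < s + a) (hb : 0 < b) (hm : 0 < m)
    (hq : K' + a = Real.exp (m ^ 2 / 2 - c) * b) :
    HasDerivAt (fun x => (x + a) * Phi ((Real.log ((x + a) / b) + c) / m)
      - (K' + a) * Phi ((Real.log ((x + a) / b) + c) / m - m))
      (Phi ((Real.log ((s + a) / b) + c) / m)) s := by
  set D1 := (Real.log ((s + a) / b) + c) / m with hD1
  have hg : HasDerivAt (fun x => (Real.log ((x + a) / b) + c) / m)
      (1 / ((s + a) * m)) s := by
    have hinner : HasDerivAt (fun x : ℝ => (x + a) / b) (1 / b) s := by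
      simpa using ((hasDerivAt_id s).add_const a).div_const b
    have hlog := hinner.log (ne_of_gt (div_pos hsa hb))
    have hfin := (hlog.add_const c).div_const m
    exact hfin.congr_deriv (by field_simp)
  have hP1 := (hasDerivAt_Phi D1).comp s hg
  have hP2 := (hasDerivAt_Phi (D1 - m)).comp s (hg.sub_const m)
  have term1 := ((hasDerivAt_id s).add_const a).mul hP1
  have term2 := hP2.const_mul (K' + a)
  have total := term1.sub term2
  have hL : Real.log ((s + a) / b) = D1 * m - c := by
    rw [hD1]; field_simp; ring
  have hsab : s + a = b * Real.exp (D1 * m - c) := by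
    rw [← hL, Real.exp_log (div_pos hsa hb)]; field_simp
  have hexp : Real.exp (m ^ 2 / 2 - c) * Real.exp (-(D1 - m) ^ 2 / 2)
      = Real.exp (D1 * m - c) * Real.exp (-D1 ^ 2 / 2) := by
    rw [← Real.exp_add, ← Real.exp_add]; congr 1; ring
  have key : (K' + a) * (Real.exp (-(D1 - m) ^ 2 / 2) / Real.sqrt (2 * Real.pi))
      = (s + a) * (Real.exp (-D1 ^ 2 / 2) / Real.sqrt (2 * Real.pi)) := by
    rw [hq, hsab]
    linear_combination (b / Real.sqrt (2 * Real.pi)) * hexp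
  have hne : (s + a) * m ≠ 0 := by positivity
  exact total.congr_deriv (by
    simp only [Function.comp_apply, id_eq]
    linear_combination (-(1 / ((s + a) * m))) * key)

/-- Delta of the crisis-model call: ∂C/∂s = Φ(d_{t,1}^α). -/
theorem crisis_delta (s K σ α r t T : ℝ)
    (hs : 0 < s) (hK : 0 < K) (hσ : 0 < σ) (hα : 0 ≤ α)
    (ht : 0 ≤ t) (htT : t < T)
    (h1 : 0 < s + α / σ * Real.exp (r * t))
    (h2 : 0 < K + α / σ * Real.exp (r * T)) :
    HasDerivAt (fun x => C x K σ α r t T) (Phi (d1 s K σ α r t T)) s := by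
  have hτ : 0 < T - t := sub_pos.mpr htT
  have hq : K * Real.exp (-r * (T - t)) + α / σ * Real.exp (r * t)
      = Real.exp ((σ * Real.sqrt (T - t)) ^ 2 / 2 - (r + σ ^ 2 / 2) * (T - t))
        * (K + α / σ * Real.exp (r * T)) := by
    have e1 : (σ * Real.sqrt (T - t)) ^ 2 = σ ^ 2 * (T - t) := by
      rw [mul_pow, Real.sq_sqrt hτ.le]
    rw [e1]
    have e2 : σ ^ 2 * (T - t) / 2 - (r + σ ^ 2 / 2) * (T - t) = -r * (T - t) := by ring
    have e3 : Real.exp (-r * (T - t)) * Real.exp (r * T) = Real.exp (r * t) := by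
      rw [← Real.exp_add]; congr 1; ring
    rw [e2]
    linear_combination (-(α / σ)) * e3
  have hgen := delta_general (α / σ * Real.exp (r * t)) (K + α / σ * Real.exp (r * T))
      ((r + σ ^ 2 / 2) * (T - t)) (σ * Real.sqrt (T - t)) (K * Real.exp (-r * (T - t))) s
      h1 h2 (mul_pos hσ (Real.sqrt_pos.mpr hτ)) hq
  simpa only [C, d1, d2] using hgen
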